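/- There is a constant c > 0 such that for every predicate P ∈ {Cut, unCut, Or, nAnd, 10̄, 01̄}, every integer n and every ε ∈ (1/√n, 1), there exists an n-vertex weighted digraph G such that every ε-P-sparsifier of G has at least c·n/ε² edges. -/

import Mathlib

/-- A two-variable boolean predicate. -/
abbrev Pred := Bool → Bool → Bool

/-- The value `P_G(S)` of a predicate `P` on the weighted digraph `G = (V, E, w)`
for a subset `S ⊆ V`. -/
def predVal {V : Type} [DecidableEq V] (P : Pred) (E : Finset (V × V))
    (w : V × V → ℝ) (S : Finset V) : ℝ :=
  ∑ e ∈ E, if P (decide (e.1 ∈ S)) (decide (e.2 ∈ S)) then w e else 0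

/-- `(Eε, wε)` is an `ε`-`P`-sparsifier of `(E, w)`: a reweighted subgraph with strictly
positive weights whose `P`-value is within factor `(1 ± ε)` of that of `G` on every `S`. -/
def IsSparsifier {V : Type} [DecidableEq V] (P : Pred) (E : Finset (V × V))
    (w : V × V → ℝ) (Eε : Finset (V × V)) (wε : V × V → ℝ) (ε : ℝ) : Prop :=
  Eε ⊆ E ∧ (∀ e ∈ Eε, 0 < wε e) ∧
    ∀ S : Finset V,
      (1 - ε) * predVal P E w S ≤ predVal P Eε wε S ∧
        predVal P Eε wε S ≤ (1 + ε) * predVal P E w S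

/-- `Cut(x,y) = 1` iff `x ≠ y`. -/
def pCut : Pred := fun x y => x != y
/-- `unCut(x,y) = 1` iff `x = y`. -/
def pUnCut : Pred := fun x y => x == y
/-- `Or(x,y) = 1` iff `x = 1` or `y = 1`. -/
def pOr : Pred := fun x y => x || y
/-- `nAnd(x,y) = 1` iff not (`x = y = 1`). -/
def pNAnd : Pred := fun x y => !(x && y)
/-- `10̄(x,y) = 0` iff `(x,y) = (1,0)`, otherwise `1`. -/
def pBar10 : Pred := fun x y => !(x && !y)
/-- `01̄(x,y) = 0` iff `(x,y) = (0,1)`, otherwise `1`. -/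
def pBar01 : Pred := fun x y => !(!x && y)

section Aux
open Finset

def tR (b : Bool) : ℝ := if b then 1 else 0
def sR (b : Bool) : ℝ := if b then 1 else -1

lemma tR_nonneg (b : Bool) : 0 ≤ tR b := by cases b <;> simp [tR]
lemma tR_le_one (b : Bool) : tR b ≤ 1 := by cases b <;> simp [tR]
lemma sR_true : sR true = 1 := rfl
lemma sR_false : sR false = -1 := rfl

def consEquiv (d : ℕ) : Bool × (Fin d → Bool) ≃ (Fin (d + 1) → Bool) where
  toFun p := Fin.cons p.1 p.2
  invFun y := (y 0, fun k => y k.succ)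
  left_inv p := by simp
  right_inv y := Fin.cons_self_tail y

lemma sum_cube_succ (d : ℕ) (F : (Fin (d+1) → Bool) → ℝ) :
    ∑ y : Fin (d+1) → Bool, F y
      = ∑ y : Fin d → Bool, (F (Fin.cons true y) + F (Fin.cons false y)) := by
  rw [← Equiv.sum_comp (consEquiv d) F, Fintype.sum_prod_type]
  simp only [consEquiv, Equiv.coe_fn_mk, Fintype.sum_bool]
  rw [← Finset.sum_add_distrib]
  rfl

lemma card_cube (d : ℕ) : (Finset.univ : Finset (Fin d → Bool)).card = 2^d := by
  simp [Fintype.card_fun]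

lemma K2 : ∀ (d : ℕ) (c : Fin d → ℝ),
    ∑ y : Fin d → Bool, (∑ k, c k * sR (y k))^2 = 2^d * ∑ k, (c k)^2 := by
  intro d
  induction d with
  | zero => intro c; simp
  | succ d ih =>
    intro c
    rw [sum_cube_succ d (fun y => (∑ k, c k * sR (y k))^2)]
    have key : ∀ y : Fin d → Bool,
        (∑ k, c k * sR ((Fin.cons true y : Fin (d+1) → Bool) k))^2
        + (∑ k, c k * sR ((Fin.cons false y : Fin (d+1) → Bool) k))^2
        = 2 * (c 0)^2 + 2 * (∑ k : Fin d, c k.succ * sR (y k))^2 := by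
      intro y
      rw [Fin.sum_univ_succ, Fin.sum_univ_succ]
      simp only [Fin.cons_zero, Fin.cons_succ, sR_true, sR_false]
      ring
    rw [Finset.sum_congr rfl (fun y _ => key y), Finset.sum_add_distrib]
    have e2 : ∑ y : Fin d → Bool, (2:ℝ) * (∑ k : Fin d, c k.succ * sR (y k))^2
        = 2 * (2^d * ∑ k : Fin d, (c k.succ)^2) := by
      rw [← Finset.mul_sum, ih (fun k => c k.succ)]
    rw [e2, Finset.sum_const, card_cube, Fin.sum_univ_succ (fun k => (c k)^2)]
    simp only [nsmul_eq_mul]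
    push_cast
    ring

lemma K4 : ∀ (d : ℕ) (c : Fin d → ℝ),
    ∑ y : Fin d → Bool, (∑ k, c k * sR (y k))^4 ≤ 3 * 2^d * (∑ k, (c k)^2)^2 := by
  intro d
  induction d with
  | zero => intro c; simp
  | succ d ih =>
    intro c
    rw [sum_cube_succ d (fun y => (∑ k, c k * sR (y k))^4)]
    have key : ∀ y : Fin d → Bool,
        (∑ k, c k * sR ((Fin.cons true y : Fin (d+1) → Bool) k))^4
        + (∑ k, c k * sR ((Fin.cons false y : Fin (d+1) → Bool) k))^4
        = 2 * (c 0)^4 + (12 * (c 0)^2) * (∑ k : Fin d, c k.succ * sR (y k))^2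
          + 2 * (∑ k : Fin d, c k.succ * sR (y k))^4 := by
      intro y
      rw [Fin.sum_univ_succ, Fin.sum_univ_succ]
      simp only [Fin.cons_zero, Fin.cons_succ, sR_true, sR_false]
      ring
    rw [Finset.sum_congr rfl (fun y _ => key y)]
    rw [Finset.sum_add_distrib, Finset.sum_add_distrib]
    have e1 : ∑ _y : Fin d → Bool, (2:ℝ) * (c 0)^4 = 2^d * (2 * (c 0)^4) := by
      rw [Finset.sum_const, card_cube]; simp [nsmul_eq_mul]
    have e2 : ∑ y : Fin d → Bool, (12 * (c 0)^2) * (∑ k : Fin d, c k.succ * sR (y k))^2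
        = (12 * (c 0)^2) * (2^d * ∑ k : Fin d, (c k.succ)^2) := by
      rw [← Finset.mul_sum, K2 d (fun k => c k.succ)]
    have e3 : ∑ y : Fin d → Bool, (2:ℝ) * (∑ k : Fin d, c k.succ * sR (y k))^4
        ≤ 2 * (3 * 2^d * (∑ k : Fin d, (c k.succ)^2)^2) := by
      rw [← Finset.mul_sum]
      exact mul_le_mul_of_nonneg_left (ih (fun k => c k.succ)) (by norm_num)
    rw [e1, e2, Fin.sum_univ_succ (fun k => (c k)^2)]
    have hS : (0:ℝ) ≤ ∑ k : Fin d, (c k.succ)^2 :=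
      Finset.sum_nonneg (fun k _ => sq_nonneg _)
    have h2d : (0:ℝ) < 2^d := by positivity
    have hc4 : (0:ℝ) ≤ (c 0)^4 := by positivity
    have expand : 3 * 2^(d+1) * ((c 0)^2 + ∑ k : Fin d, (c k.succ)^2)^2
        = 2^d * (2 * (c 0)^4) + (12 * (c 0)^2) * (2^d * ∑ k : Fin d, (c k.succ)^2)
          + 2 * (3 * 2^d * (∑ k : Fin d, (c k.succ)^2)^2) + 4 * (2^d * (c 0)^4) := by
      push_cast; ring
    push_cast
    push_cast at expand
    linarith [e3, mul_nonneg h2d.le hc4]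

/-- L1 Khintchine, squared form: `(2^d)^2 * S ≤ 3 * (∑_y |X y|)^2`. -/
lemma K1 (d : ℕ) (c : Fin d → ℝ) :
    ((2:ℝ)^d)^2 * (∑ k, (c k)^2) ≤ 3 * (∑ y : Fin d → Bool, |∑ k, c k * sR (y k)|)^2 := by
  set X : (Fin d → Bool) → ℝ := fun y => ∑ k, c k * sR (y k) with hX
  set S : ℝ := ∑ k, (c k)^2 with hS
  have hS0 : 0 ≤ S := Finset.sum_nonneg (fun k _ => sq_nonneg _)
  set A1 : ℝ := ∑ y : Fin d → Bool, |X y| with hA1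
  set A3 : ℝ := ∑ y : Fin d → Bool, |X y|^3 with hA3
  have hA10 : 0 ≤ A1 := Finset.sum_nonneg (fun y _ => abs_nonneg _)
  have hA30 : 0 ≤ A3 := Finset.sum_nonneg (fun y _ => by positivity)
  have hA2 : ∑ y : Fin d → Bool, (X y)^2 = 2^d * S := K2 d c
  have hA4 : ∑ y : Fin d → Bool, (X y)^4 ≤ 3 * 2^d * S^2 := K4 d c
  -- CS1 : (∑ X²)² ≤ A1 * A3
  have cs1 : ((2:ℝ)^d * S)^2 ≤ A1 * A3 := by
    have h := Finset.sum_mul_sq_le_sq_mul_sq Finset.univ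
      (fun y : Fin d → Bool => Real.sqrt |X y|) (fun y => Real.sqrt (|X y|^3))
    have e : ∀ y : Fin d → Bool, Real.sqrt |X y| * Real.sqrt (|X y|^3) = (X y)^2 := by
      intro y
      rw [← Real.sqrt_mul (abs_nonneg _)]
      have h4 : |X y| * |X y|^3 = ((X y)^2)^2 := by
        have e4 : |X y| * |X y|^3 = |X y|^4 := by ring
        rw [e4, ← abs_pow, abs_of_nonneg (by positivity : (0:ℝ) ≤ (X y)^4)]
        ring
      rw [h4, Real.sqrt_sq (sq_nonneg _)]
    have e2 : ∀ y : Fin d → Bool, (Real.sqrt |X y|)^2 = |X y| :=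
      fun y => Real.sq_sqrt (abs_nonneg _)
    have e3 : ∀ y : Fin d → Bool, (Real.sqrt (|X y|^3))^2 = |X y|^3 :=
      fun y => Real.sq_sqrt (by positivity)
    calc ((2:ℝ)^d * S)^2 = (∑ y : Fin d → Bool, (X y)^2)^2 := by rw [hA2]
      _ = (∑ y : Fin d → Bool, Real.sqrt |X y| * Real.sqrt (|X y|^3))^2 := by
            rw [Finset.sum_congr rfl (fun y _ => (e y).symm)]
      _ ≤ (∑ y : Fin d → Bool, (Real.sqrt |X y|)^2) * (∑ y : Fin d → Bool, (Real.sqrt (|X y|^3))^2) := h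
      _ = A1 * A3 := by rw [Finset.sum_congr rfl (fun y _ => e2 y), Finset.sum_congr rfl (fun y _ => e3 y)]
  -- CS2 : A3² ≤ (∑X²)(∑X⁴)
  have cs2 : A3^2 ≤ (2^d * S) * (3 * 2^d * S^2) := by
    have h := Finset.sum_mul_sq_le_sq_mul_sq Finset.univ
      (fun y : Fin d → Bool => |X y|) (fun y => (X y)^2)
    have e : ∀ y : Fin d → Bool, |X y| * (X y)^2 = |X y|^3 := by
      intro y; rw [← sq_abs]; ring
    have e2 : ∀ y : Fin d → Bool, ((X y)^2)^2 = (X y)^4 := fun y => by ring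
    have hsum4 : (0:ℝ) ≤ ∑ y : Fin d → Bool, (X y)^4 :=
      Finset.sum_nonneg (fun y _ => by positivity)
    calc A3^2 = (∑ y : Fin d → Bool, |X y| * (X y)^2)^2 := by
            rw [hA3, Finset.sum_congr rfl (fun y _ => (e y).symm)]
      _ ≤ (∑ y : Fin d → Bool, |X y|^2) * (∑ y : Fin d → Bool, ((X y)^2)^2) := h
      _ = (∑ y : Fin d → Bool, (X y)^2) * (∑ y : Fin d → Bool, (X y)^4) := by
            rw [Finset.sum_congr rfl (fun y _ => sq_abs (X y)),
              Finset.sum_congr rfl (fun y _ => e2 y)]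
      _ ≤ (2^d * S) * (3 * 2^d * S^2) := by
            rw [hA2]
            exact mul_le_mul_of_nonneg_left hA4 (by positivity)
  -- combine
  rcases eq_or_lt_of_le hS0 with h0 | hSpos
  · rw [← h0]; nlinarith [sq_nonneg A1]
  · have h2d : (0:ℝ) < 2^d := by positivity
    -- (2^d S)^4 ≤ (A1 A3)^2 ≤ A1^2 * (2^d S)(3 2^d S²)
    have step : ((2:ℝ)^d * S)^4 ≤ A1^2 * ((2^d * S) * (3 * 2^d * S^2)) := by
      calc ((2:ℝ)^d * S)^4 = (((2:ℝ)^d * S)^2)^2 := by ring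
        _ ≤ (A1 * A3)^2 := by
            apply pow_le_pow_left₀ (by positivity) cs1 2
        _ = A1^2 * A3^2 := by ring
        _ ≤ A1^2 * ((2^d * S) * (3 * 2^d * S^2)) :=
            mul_le_mul_of_nonneg_left cs2 (sq_nonneg _)
    have hpos : (0:ℝ) < (2^d * S)^3 := by positivity
    have : ((2:ℝ)^d)^2 * S * ((2^d * S)^3) ≤ (3 * A1^2) * ((2^d * S)^3) := by
      nlinarith [step]
    have := le_of_mul_le_mul_right this hpos
    linarith

/-- pairing: `∑_y |X y| ≤ 2 ∑_y |g y|` where `g` uses 0/1 and `X` uses ±1 weights. -/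
lemma pairing (d : ℕ) (c : Fin d → ℝ) :
    ∑ y : Fin d → Bool, |∑ k, c k * sR (y k)| ≤ 2 * ∑ y : Fin d → Bool, |∑ k, c k * tR (y k)| := by
  have hinv : Function.Involutive (fun (y : Fin d → Bool) => fun k => !(y k)) := by
    intro y; funext k; simp
  have hflip : ∑ y : Fin d → Bool, |∑ k, c k * tR (!(y k))|
      = ∑ y : Fin d → Bool, |∑ k, c k * tR (y k)| :=
    Equiv.sum_comp hinv.toPerm (fun y => |∑ k, c k * tR (y k)|)
  have hpt : ∀ y : Fin d → Bool,
      |∑ k, c k * sR (y k)| ≤ |∑ k, c k * tR (y k)| + |∑ k, c k * tR (!(y k))| := by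
    intro y
    have e : ∑ k, c k * sR (y k) = (∑ k, c k * tR (y k)) - ∑ k, c k * tR (!(y k)) := by
      rw [← Finset.sum_sub_distrib]
      refine Finset.sum_congr rfl (fun k _ => ?_)
      cases y k <;> simp [sR, tR] <;> ring
    rw [e]
    exact abs_sub _ _
  calc ∑ y : Fin d → Bool, |∑ k, c k * sR (y k)|
      ≤ ∑ y : Fin d → Bool, (|∑ k, c k * tR (y k)| + |∑ k, c k * tR (!(y k))|) :=
        Finset.sum_le_sum (fun y _ => hpt y)
    _ = 2 * ∑ y : Fin d → Bool, |∑ k, c k * tR (y k)| := by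
        rw [Finset.sum_add_distrib, hflip]; ring

set_option maxHeartbeats 1000000 in
/-- Abstract block lemma. -/
lemma blockB (d : ℕ) (ε : ℝ) (hε : 0 ≤ ε) (hεd : ε^2 * d ≤ 1/4096)
    (D : Fin d → Fin d → ℝ) (Z : Finset (Fin d × Fin d)) (hZ : ∀ p ∈ Z, D p.1 p.2 = -1)
    (hQ : ∀ x y : Fin d → Bool,
      |∑ jk : Fin d × Fin d, D jk.1 jk.2 * tR (x jk.1) * tR (y jk.2)| ≤ 4 * (ε * (d:ℝ)^2)) :
    (Z.card : ℝ) ≤ (d:ℝ)^2 / 2 := by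
  classical
  set N : ℝ := 2^d with hN
  have hN0 : (0:ℝ) < N := by positivity
  set K : ℝ := Real.sqrt (3 * d) with hK
  have hK0 : 0 ≤ K := Real.sqrt_nonneg _
  have hK2 : K^2 = 3 * d := Real.sq_sqrt (by positivity)
  set g : Fin d → (Fin d → Bool) → ℝ := fun j y => ∑ k, D j k * tR (y k) with hg
  set G : Fin d → ℝ := fun j => ∑ y : Fin d → Bool, |g j y| with hG
  have hG0 : ∀ j, 0 ≤ G j := fun j => Finset.sum_nonneg (fun y _ => abs_nonneg _)
  -- row missing counts
  set zj : Fin d → ℕ := fun j => ((Z.filter (fun p => p.1 = j)).image Prod.snd).card with hzj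
  have hzsum : ∑ j, (zj j : ℝ) = Z.card := by
    have hfib := Finset.card_eq_sum_card_fiberwise
      (f := Prod.fst) (s := Z) (t := (univ : Finset (Fin d)))
      (fun x _ => Finset.mem_univ _)
    have himg : ∀ j, zj j = (Z.filter (fun p => p.1 = j)).card := by
      intro j
      apply Finset.card_image_of_injOn
      intro p hp q hq hpq
      simp only [Finset.mem_coe, Finset.mem_filter] at hp hq
      exact Prod.ext (hp.2.trans hq.2.symm) hpq
    rw [hfib]
    push_cast
    exact Finset.sum_congr rfl (fun j _ => by rw [himg j])
  -- per row: N * zj ≤ 2 * K * G j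
  have hrow : ∀ j, N * (zj j : ℝ) ≤ K * (2 * G j) := by
    intro j
    set S : ℝ := ∑ k, (D j k)^2 with hS
    have hS0 : 0 ≤ S := Finset.sum_nonneg (fun k _ => sq_nonneg _)
    have hzS : (zj j : ℝ) ≤ S := by
      have hsub : (Z.filter (fun p => p.1 = j)).image Prod.snd ⊆ univ := Finset.subset_univ _
      have hone : ∀ k ∈ (Z.filter (fun p => p.1 = j)).image Prod.snd, (1:ℝ) ≤ (D j k)^2 := by
        intro k hk
        simp only [Finset.mem_image, Finset.mem_filter] at hk
        obtain ⟨p, ⟨hpZ, hpj⟩, hpk⟩ := hk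
        have := hZ p hpZ
        rw [hpj, hpk] at this
        rw [this]; norm_num
      calc (zj j : ℝ) = ∑ _k ∈ (Z.filter (fun p => p.1 = j)).image Prod.snd, (1:ℝ) := by
            simp [hzj]
        _ ≤ ∑ k ∈ (Z.filter (fun p => p.1 = j)).image Prod.snd, (D j k)^2 :=
            Finset.sum_le_sum hone
        _ ≤ S := Finset.sum_le_sum_of_subset_of_nonneg hsub (fun k _ _ => sq_nonneg _)
    have hzd : (zj j : ℝ) ≤ d := by
      have := Finset.card_le_card (Finset.subset_univ ((Z.filter (fun p => p.1 = j)).image Prod.snd))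
      simpa [hzj] using this
    have hz0 : (0:ℝ) ≤ (zj j : ℝ) := Nat.cast_nonneg _
    have hA1 : N^2 * S ≤ 3 * (∑ y : Fin d → Bool, |∑ k, D j k * sR (y k)|)^2 := K1 d (D j)
    set A1 : ℝ := ∑ y : Fin d → Bool, |∑ k, D j k * sR (y k)| with hA1d
    have hA10 : 0 ≤ A1 := Finset.sum_nonneg (fun y _ => abs_nonneg _)
    have hpair : A1 ≤ 2 * G j := pairing d (D j)
    -- (N zj)^2 ≤ (K A1)^2
    have hsq : (N * zj j)^2 ≤ (K * A1)^2 := by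
      have h1 : (N * zj j)^2 = N^2 * ((zj j:ℝ))^2 := by ring
      have h2 : ((zj j:ℝ))^2 ≤ S * d := by nlinarith
      calc (N * zj j)^2 = N^2 * ((zj j:ℝ))^2 := by ring
        _ ≤ N^2 * (S * d) := by nlinarith [sq_nonneg N]
        _ = (N^2 * S) * d := by ring
        _ ≤ (3 * A1^2) * d := by nlinarith [Nat.cast_nonneg (α := ℝ) d]
        _ = (K * A1)^2 := by rw [mul_pow, hK2]; ring
    have hNz : N * zj j ≤ K * A1 := by
      have hl : 0 ≤ N * (zj j : ℝ) := by positivity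
      have hr : 0 ≤ K * A1 := mul_nonneg hK0 hA10
      nlinarith [hsq]
    calc N * (zj j : ℝ) ≤ K * A1 := hNz
      _ ≤ K * (2 * G j) := mul_le_mul_of_nonneg_left hpair hK0
  -- sum over j, find good y
  have hsumrow : N * (Z.card : ℝ) ≤ K * (2 * ∑ y : Fin d → Bool, ∑ j, |g j y|) := by
    have : ∑ j, N * (zj j : ℝ) ≤ ∑ j, K * (2 * G j) := Finset.sum_le_sum (fun j _ => hrow j)
    rw [← Finset.mul_sum, hzsum] at this
    calc N * (Z.card:ℝ) ≤ ∑ j, K * (2 * G j) := this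
      _ = ∑ j, (2 * K) * G j := Finset.sum_congr rfl (fun j _ => by ring)
      _ = (2 * K) * ∑ j, G j := (Finset.mul_sum _ _ _).symm
      _ = (2 * K) * ∑ j, ∑ y : Fin d → Bool, |g j y| := by rw [hG]
      _ = (2 * K) * ∑ y : Fin d → Bool, ∑ j, |g j y| := by rw [Finset.sum_comm]
      _ = K * (2 * ∑ y : Fin d → Bool, ∑ j, |g j y|) := by ring
  have hex : ∃ y : Fin d → Bool, (Z.card : ℝ) ≤ 2 * K * (∑ j, |g j y|) := by
    have hne : (univ : Finset (Fin d → Bool)).Nonempty := univ_nonempty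
    have hsum : ∑ _y : Fin d → Bool, (Z.card : ℝ) ≤ ∑ y : Fin d → Bool, 2 * K * (∑ j, |g j y|) := by
      rw [Finset.sum_const, card_cube]
      simp only [nsmul_eq_mul]
      calc (2^d : ℕ) * (Z.card : ℝ) = N * Z.card := by rw [hN]; push_cast; ring
        _ ≤ K * (2 * ∑ y : Fin d → Bool, ∑ j, |g j y|) := hsumrow
        _ = (2 * K) * ∑ y : Fin d → Bool, ∑ j, |g j y| := by ring
        _ = ∑ y : Fin d → Bool, 2 * K * (∑ j, |g j y|) := Finset.mul_sum _ _ _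
    obtain ⟨y, _, hy⟩ := Finset.exists_le_of_sum_le hne hsum
    exact ⟨y, hy⟩
  obtain ⟨y₀, hy₀⟩ := hex
  -- choose signs x
  set xp : Fin d → Bool := fun j => decide (0 < g j y₀) with hxp
  set xn : Fin d → Bool := fun j => decide (g j y₀ < 0) with hxn
  have hQform : ∀ x : Fin d → Bool,
      ∑ jk : Fin d × Fin d, D jk.1 jk.2 * tR (x jk.1) * tR (y₀ jk.2)
        = ∑ j, tR (x j) * g j y₀ := by
    intro x
    rw [Fintype.sum_prod_type]
    refine Finset.sum_congr rfl (fun j _ => ?_)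
    rw [hg]
    simp only []
    rw [Finset.mul_sum]
    refine Finset.sum_congr rfl (fun k _ => by ring)
  have hsplit : ∑ j, |g j y₀| = (∑ j, tR (xp j) * g j y₀) - ∑ j, tR (xn j) * g j y₀ := by
    rw [← Finset.sum_sub_distrib]
    refine Finset.sum_congr rfl (fun j _ => ?_)
    rcases lt_trichotomy (g j y₀) 0 with h | h | h
    · rw [abs_of_neg h]; simp [hxp, hxn, tR, not_lt.2 h.le, h, asymm h]
    · simp [hxp, hxn, tR, h]
    · rw [abs_of_pos h]; simp [hxp, hxn, tR, h, not_lt.2 h.le, asymm h]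
  have hH : ∑ j, |g j y₀| ≤ 8 * (ε * (d:ℝ)^2) := by
    have h1 := hQ xp y₀
    have h2 := hQ xn y₀
    rw [hQform xp] at h1
    rw [hQform xn] at h2
    rw [hsplit]
    have := abs_sub ((∑ j, tR (xp j) * g j y₀)) (∑ j, tR (xn j) * g j y₀)
    calc (∑ j, tR (xp j) * g j y₀) - ∑ j, tR (xn j) * g j y₀
        ≤ |(∑ j, tR (xp j) * g j y₀) - ∑ j, tR (xn j) * g j y₀| := le_abs_self _
      _ ≤ |∑ j, tR (xp j) * g j y₀| + |∑ j, tR (xn j) * g j y₀| := abs_sub _ _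
      _ ≤ 4 * (ε * (d:ℝ)^2) + 4 * (ε * (d:ℝ)^2) := add_le_add h1 h2
      _ = 8 * (ε * (d:ℝ)^2) := by ring
  -- conclude
  have hKe : K * ε ≤ 1/32 := by
    have hsq : (K * ε)^2 ≤ (1/32:ℝ)^2 := by
      rw [mul_pow, hK2]
      calc 3 * (d:ℝ) * ε^2 = 3 * (ε^2 * d) := by ring
        _ ≤ 3 * (1/4096) := by nlinarith
        _ ≤ (1/32:ℝ)^2 := by norm_num
    have h0 : 0 ≤ K * ε := mul_nonneg hK0 hε
    nlinarith
  calc (Z.card : ℝ) ≤ 2 * K * (∑ j, |g j y₀|) := hy₀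
    _ ≤ 2 * K * (8 * (ε * (d:ℝ)^2)) := by
        apply mul_le_mul_of_nonneg_left hH (by positivity)
    _ = 16 * (K * ε) * (d:ℝ)^2 := by ring
    _ = (16 * (K * ε)) * (d:ℝ)^2 := by ring
    _ ≤ (16 * (1/32)) * (d:ℝ)^2 := mul_le_mul_of_nonneg_right (by linarith) (sq_nonneg _)
    _ = (d:ℝ)^2 / 2 := by ring

/-- the "degree-2 coefficient" of a predicate -/
def dlt (P : Pred) : ℝ := tR (P true true) - tR (P true false) - tR (P false true) + tR (P false false)

lemma expandP (P : Pred) (a b : Bool) :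
    tR (P a b) = tR (P false false)
      + (tR (P true false) - tR (P false false)) * tR a
      + (tR (P false true) - tR (P false false)) * tR b
      + dlt P * (tR a * tR b) := by
  cases a <;> cases b <;> simp [tR, dlt] <;> ring

lemma Qbound {d : ℕ} (P : Pred) (hδ : 1 ≤ |dlt P|) (D : Fin d → Fin d → ℝ) (C : ℝ)
    (h : ∀ x y : Fin d → Bool,
      |∑ jk : Fin d × Fin d, D jk.1 jk.2 * tR (P (x jk.1) (y jk.2))| ≤ C) :
    ∀ x y : Fin d → Bool,
      |∑ jk : Fin d × Fin d, D jk.1 jk.2 * tR (x jk.1) * tR (y jk.2)| ≤ 4 * C := by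
  intro x y
  set α : ℝ := tR (P false false)
  set β : ℝ := tR (P true false) - tR (P false false)
  set γ : ℝ := tR (P false true) - tR (P false false)
  have key : ∀ u v : Fin d → Bool,
      ∑ jk : Fin d × Fin d, D jk.1 jk.2 * tR (P (u jk.1) (v jk.2))
        = α * (∑ jk : Fin d × Fin d, D jk.1 jk.2)
          + β * (∑ jk : Fin d × Fin d, D jk.1 jk.2 * tR (u jk.1))
          + γ * (∑ jk : Fin d × Fin d, D jk.1 jk.2 * tR (v jk.2))
          + dlt P * (∑ jk : Fin d × Fin d, D jk.1 jk.2 * tR (u jk.1) * tR (v jk.2)) := by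
    intro u v
    rw [Finset.mul_sum, Finset.mul_sum, Finset.mul_sum, Finset.mul_sum,
      ← Finset.sum_add_distrib, ← Finset.sum_add_distrib, ← Finset.sum_add_distrib]
    refine Finset.sum_congr rfl (fun jk _ => ?_)
    rw [expandP P (u jk.1) (v jk.2)]
    ring
  set x0 : Fin d → Bool := fun _ => false with hx0
  have hz : ∀ (u : Fin d → Bool), ∑ jk : Fin d × Fin d, D jk.1 jk.2 * tR (x0 jk.1) = 0 := by
    intro u
    simp [tR]
  have hz2 : ∑ jk : Fin d × Fin d, D jk.1 jk.2 * tR (x0 jk.2) = 0 := by simp [tR]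
  have hzq1 : ∀ u : Fin d → Bool,
      ∑ jk : Fin d × Fin d, D jk.1 jk.2 * tR (u jk.1) * tR (x0 jk.2) = 0 := by
    intro u; simp [tR]
  have hzq2 : ∀ v : Fin d → Bool,
      ∑ jk : Fin d × Fin d, D jk.1 jk.2 * tR (x0 jk.1) * tR (v jk.2) = 0 := by
    intro v; simp [tR]
  have fxy := key x y
  have fx0 := key x x0
  have f0y := key x0 y
  have f00 := key x0 x0
  rw [hzq1 x, hz2] at fx0
  rw [hzq2 y, hz x0] at f0y
  rw [hzq1 x0, hz x0] at f00
  try rw [hz2] at f00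
  have combo : dlt P * (∑ jk : Fin d × Fin d, D jk.1 jk.2 * tR (x jk.1) * tR (y jk.2))
      = (∑ jk : Fin d × Fin d, D jk.1 jk.2 * tR (P (x jk.1) (y jk.2)))
        - (∑ jk : Fin d × Fin d, D jk.1 jk.2 * tR (P (x jk.1) (x0 jk.2)))
        - (∑ jk : Fin d × Fin d, D jk.1 jk.2 * tR (P (x0 jk.1) (y jk.2)))
        + (∑ jk : Fin d × Fin d, D jk.1 jk.2 * tR (P (x0 jk.1) (x0 jk.2))) := by
    rw [fxy, fx0, f0y, f00]
    ring
  have habs : |dlt P * (∑ jk : Fin d × Fin d, D jk.1 jk.2 * tR (x jk.1) * tR (y jk.2))| ≤ 4 * C := by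
    rw [combo]
    set a1 := ∑ jk : Fin d × Fin d, D jk.1 jk.2 * tR (P (x jk.1) (y jk.2)) with ha1
    set a2 := ∑ jk : Fin d × Fin d, D jk.1 jk.2 * tR (P (x jk.1) (x0 jk.2)) with ha2
    set a3 := ∑ jk : Fin d × Fin d, D jk.1 jk.2 * tR (P (x0 jk.1) (y jk.2)) with ha3
    set a4 := ∑ jk : Fin d × Fin d, D jk.1 jk.2 * tR (P (x0 jk.1) (x0 jk.2)) with ha4
    have t1 : |a1 - a2 - a3 + a4| ≤ |a1 - a2 - a3| + |a4| := abs_add_le _ _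
    have t2 : |a1 - a2 - a3| ≤ |a1 - a2| + |a3| := abs_sub _ _
    have t3 : |a1 - a2| ≤ |a1| + |a2| := abs_sub _ _
    have b1 := h x y
    have b2 := h x x0
    have b3 := h x0 y
    have b4 := h x0 x0
    rw [← ha1] at b1
    rw [← ha2] at b2
    rw [← ha3] at b3
    rw [← ha4] at b4
    linarith
  have : |∑ jk : Fin d × Fin d, D jk.1 jk.2 * tR (x jk.1) * tR (y jk.2)|
      ≤ |dlt P| * |∑ jk : Fin d × Fin d, D jk.1 jk.2 * tR (x jk.1) * tR (y jk.2)| := by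
    nlinarith [abs_nonneg (∑ jk : Fin d × Fin d, D jk.1 jk.2 * tR (x jk.1) * tR (y jk.2))]
  calc |∑ jk : Fin d × Fin d, D jk.1 jk.2 * tR (x jk.1) * tR (y jk.2)|
      ≤ |dlt P| * |∑ jk : Fin d × Fin d, D jk.1 jk.2 * tR (x jk.1) * tR (y jk.2)| := this
    _ = |dlt P * (∑ jk : Fin d × Fin d, D jk.1 jk.2 * tR (x jk.1) * tR (y jk.2))| := (abs_mul _ _).symm
    _ ≤ 4 * C := habs

section Build
variable {n m d : ℕ} (φ : (Fin m × Bool × Fin d) ↪ Fin n)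

/-- the edge of block `i` from left vertex `j` to right vertex `k`. -/
def eM (p : Fin m × Fin d × Fin d) : Fin n × Fin n :=
  (φ (p.1, false, p.2.1), φ (p.1, true, p.2.2))

lemma eM_inj : Function.Injective (eM φ) := by
  rintro ⟨i, j, k⟩ ⟨i', j', k'⟩ h
  simp only [eM, Prod.mk.injEq] at h
  have h1 := φ.injective h.1
  have h2 := φ.injective h.2
  simp only [Prod.mk.injEq] at h1 h2
  simp only [Prod.mk.injEq]
  exact ⟨h1.1, h1.2.2, h2.2.2⟩

/-- the graph: disjoint complete bipartite blocks. -/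
def EG : Finset (Fin n × Fin n) := Finset.univ.image (eM φ)

/-- boolean membership pattern: block `i₀` gets `(x, y)`, other blocks get `(νL, νR)`. -/
def memB (νL νR : Bool) (i₀ : Fin m) (x y : Fin d → Bool) (q : Fin m × Bool × Fin d) : Bool :=
  if q.2.1 then (if q.1 = i₀ then y q.2.2 else νR) else (if q.1 = i₀ then x q.2.2 else νL)

/-- the test set. -/
def SS (νL νR : Bool) (i₀ : Fin m) (x y : Fin d → Bool) : Finset (Fin n) :=
  (Finset.univ.filter (fun q => memB νL νR i₀ x y q = true)).image φ

lemma mem_SS (νL νR : Bool) (i₀ : Fin m) (x y : Fin d → Bool) (q : Fin m × Bool × Fin d) :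
    (φ q ∈ SS φ νL νR i₀ x y) ↔ memB νL νR i₀ x y q = true := by
  constructor
  · intro h
    simp only [SS, Finset.mem_image, Finset.mem_filter] at h
    obtain ⟨a, ⟨_, ha⟩, he⟩ := h
    rwa [φ.injective he] at ha
  · intro h
    simp only [SS, Finset.mem_image]
    exact ⟨q, Finset.mem_filter.2 ⟨Finset.mem_univ _, h⟩, rfl⟩

lemma decide_SS (νL νR : Bool) (i₀ : Fin m) (x y : Fin d → Bool) (q : Fin m × Bool × Fin d) :
    decide (φ q ∈ SS φ νL νR i₀ x y) = memB νL νR i₀ x y q := by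
  have h := mem_SS φ νL νR i₀ x y q
  cases hb : memB νL νR i₀ x y q
  · simp [hb] at h; simp [h]
  · simp [hb] at h; simp [h]

lemma memB_left (νL νR : Bool) (i₀ i : Fin m) (x y : Fin d → Bool) (j : Fin d) :
    memB νL νR i₀ x y (i, false, j) = if i = i₀ then x j else νL := by
  simp [memB]

lemma memB_right (νL νR : Bool) (i₀ i : Fin m) (x y : Fin d → Bool) (k : Fin d) :
    memB νL νR i₀ x y (i, true, k) = if i = i₀ then y k else νR := by
  simp [memB]

variable (P : Pred) (νL νR : Bool)

/-- value of `G` on a test set. -/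
lemma gval (hν : P νL νR = false) (i₀ : Fin m) (x y : Fin d → Bool) :
    predVal P (EG φ) (fun _ => (1:ℝ)) (SS φ νL νR i₀ x y)
      = ∑ jk : Fin d × Fin d, tR (P (x jk.1) (y jk.2)) := by
  unfold predVal EG
  rw [Finset.sum_image (fun a _ b _ h => eM_inj φ h)]
  have step : ∀ p : Fin m × Fin d × Fin d,
      (if P (decide ((eM φ p).1 ∈ SS φ νL νR i₀ x y)) (decide ((eM φ p).2 ∈ SS φ νL νR i₀ x y))
        then (1:ℝ) else 0)
      = (if p.1 = i₀ then tR (P (x p.2.1) (y p.2.2)) else 0) := by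
    rintro ⟨i, j, k⟩
    show (if P (decide (φ (i, false, j) ∈ _)) (decide (φ (i, true, k) ∈ _)) then (1:ℝ) else 0) = _
    erw [decide_SS, decide_SS, memB_left, memB_right]
    by_cases hi : i = i₀
    · subst hi; simp [tR]
    · simp only [if_neg hi, hν]
      simp
  rw [Finset.sum_congr rfl (fun p _ => step p)]
  rw [Fintype.sum_prod_type]
  have inner : ∀ i : Fin m,
      (∑ jk : Fin d × Fin d, if i = i₀ then tR (P (x jk.1) (y jk.2)) else 0)
        = if i = i₀ then (∑ jk : Fin d × Fin d, tR (P (x jk.1) (y jk.2))) else 0 := by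
    intro i; by_cases hi : i = i₀ <;> simp [hi]
  rw [Finset.sum_congr rfl (fun i _ => inner i)]
  rw [Finset.sum_ite_eq' Finset.univ i₀
    (fun _ => ∑ jk : Fin d × Fin d, tR (P (x jk.1) (y jk.2)))]
  simp

/-- block weights of the sparsifier. -/
def Wb (Eε : Finset (Fin n × Fin n)) (wε : Fin n × Fin n → ℝ) (i₀ : Fin m)
    (jk : Fin d × Fin d) : ℝ :=
  if eM φ (i₀, jk.1, jk.2) ∈ Eε then wε (eM φ (i₀, jk.1, jk.2)) else 0

/-- value of the sparsifier on a test set. -/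
lemma hval (hν : P νL νR = false) (Eε : Finset (Fin n × Fin n)) (wε : Fin n × Fin n → ℝ)
    (hsub : Eε ⊆ EG φ) (i₀ : Fin m) (x y : Fin d → Bool) :
    predVal P Eε wε (SS φ νL νR i₀ x y)
      = ∑ jk : Fin d × Fin d, Wb φ Eε wε i₀ jk * tR (P (x jk.1) (y jk.2)) := by
  unfold predVal
  have h1 : ∑ e ∈ Eε, (if P (decide (e.1 ∈ SS φ νL νR i₀ x y)) (decide (e.2 ∈ SS φ νL νR i₀ x y)) then wε e else 0)
      = ∑ e ∈ EG φ, (if e ∈ Eε then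
          (if P (decide (e.1 ∈ SS φ νL νR i₀ x y)) (decide (e.2 ∈ SS φ νL νR i₀ x y)) then wε e else 0) else 0) := by
    rw [Finset.sum_ite_mem, Finset.inter_eq_right.2 hsub]
  rw [h1]
  unfold EG
  rw [Finset.sum_image (fun a _ b _ h => eM_inj φ h)]
  have step : ∀ p : Fin m × Fin d × Fin d,
      (if eM φ p ∈ Eε then
        (if P (decide ((eM φ p).1 ∈ SS φ νL νR i₀ x y)) (decide ((eM φ p).2 ∈ SS φ νL νR i₀ x y))
          then wε (eM φ p) else 0) else 0)
      = (if p.1 = i₀ then Wb φ Eε wε i₀ p.2 * tR (P (x p.2.1) (y p.2.2)) else 0) := by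
    rintro ⟨i, j, k⟩
    show (if eM φ (i,j,k) ∈ Eε then
        (if P (decide (φ (i, false, j) ∈ _)) (decide (φ (i, true, k) ∈ _)) then _ else 0) else 0) = _
    erw [decide_SS, decide_SS, memB_left, memB_right]
    by_cases hi : i = i₀
    · subst hi
      simp only [if_pos rfl]
      by_cases hm : eM φ (i, j, k) ∈ Eε
      · by_cases hp : P (x j) (y k)
        · simp [hm, hp, Wb, tR]
        · simp [hm, hp, Wb, tR]
      · simp [hm, Wb, tR]
    · simp only [if_neg hi, hν]
      simp
  rw [Finset.sum_congr rfl (fun p _ => step p)]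
  rw [Fintype.sum_prod_type]
  have inner : ∀ i : Fin m,
      (∑ jk : Fin d × Fin d, if i = i₀ then Wb φ Eε wε i₀ jk * tR (P (x jk.1) (y jk.2)) else 0)
        = if i = i₀ then (∑ jk : Fin d × Fin d, Wb φ Eε wε i₀ jk * tR (P (x jk.1) (y jk.2))) else 0 := by
    intro i; by_cases hi : i = i₀ <;> simp [hi]
  rw [Finset.sum_congr rfl (fun i _ => inner i)]
  rw [Finset.sum_ite_eq' Finset.univ i₀
    (fun _ => ∑ jk : Fin d × Fin d, Wb φ Eε wε i₀ jk * tR (P (x jk.1) (y jk.2)))]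
  simp

lemma Wb_eq (Eε : Finset (Fin n × Fin n)) (wε : Fin n × Fin n → ℝ) (i₀ : Fin m)
    (jk : Fin d × Fin d) (h : eM φ (i₀, jk.1, jk.2) ∉ Eε) : Wb φ Eε wε i₀ jk = 0 := by
  simp [Wb, h]

end Build

section Glue
variable {n m d : ℕ} (φ : (Fin m × Bool × Fin d) ↪ Fin n) (P : Pred) (νL νR : Bool)
  (ε : ℝ) (Eε : Finset (Fin n × Fin n)) (wε : Fin n × Fin n → ℝ)

lemma gval_bounds (i₀ : Fin m) (x y : Fin d → Bool) :
    0 ≤ ∑ jk : Fin d × Fin d, tR (P (x jk.1) (y jk.2)) ∧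
    ∑ jk : Fin d × Fin d, tR (P (x jk.1) (y jk.2)) ≤ (d:ℝ)^2 := by
  constructor
  · exact Finset.sum_nonneg (fun jk _ => tR_nonneg _)
  · calc ∑ jk : Fin d × Fin d, tR (P (x jk.1) (y jk.2))
        ≤ ∑ _jk : Fin d × Fin d, (1:ℝ) := Finset.sum_le_sum (fun jk _ => tR_le_one _)
      _ = (d:ℝ)^2 := by
          rw [Finset.sum_const, Finset.card_univ]
          simp [nsmul_eq_mul]
          ring

lemma constraint (hν : P νL νR = false) (hε0 : 0 ≤ ε)
    (hsp : IsSparsifier P (EG φ) (fun _ => (1:ℝ)) Eε wε ε) (i₀ : Fin m) (x y : Fin d → Bool) :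
    |∑ jk : Fin d × Fin d, (Wb φ Eε wε i₀ jk - 1) * tR (P (x jk.1) (y jk.2))| ≤ ε * (d:ℝ)^2 := by
  obtain ⟨hsub, _, hS⟩ := hsp
  obtain ⟨hlo, hhi⟩ := hS (SS φ νL νR i₀ x y)
  rw [gval φ P νL νR hν i₀ x y, hval φ P νL νR hν Eε wε hsub i₀ x y] at hlo hhi
  obtain ⟨hg0, hgd⟩ := gval_bounds P i₀ x y
  have hdiff : ∑ jk : Fin d × Fin d, (Wb φ Eε wε i₀ jk - 1) * tR (P (x jk.1) (y jk.2))
      = (∑ jk : Fin d × Fin d, Wb φ Eε wε i₀ jk * tR (P (x jk.1) (y jk.2)))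
        - ∑ jk : Fin d × Fin d, tR (P (x jk.1) (y jk.2)) := by
    rw [← Finset.sum_sub_distrib]
    exact Finset.sum_congr rfl (fun jk _ => by ring)
  rw [hdiff, abs_le]
  constructor
  · nlinarith
  · nlinarith

/-- in a 1×1 block every edge must be kept. -/
lemma blockA {n m : ℕ} (φ : (Fin m × Bool × Fin 1) ↪ Fin n) (P : Pred) (νL νR τa τb : Bool)
    (hν : P νL νR = false) (hτ : P τa τb = true) (ε : ℝ) (hε1 : ε < 1)
    (Eε : Finset (Fin n × Fin n)) (wε : Fin n × Fin n → ℝ)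
    (hsp : IsSparsifier P (EG φ) (fun _ => (1:ℝ)) Eε wε ε) (i : Fin m) (jk : Fin 1 × Fin 1) :
    eM φ (i, jk.1, jk.2) ∈ Eε := by
  by_contra hmiss
  obtain ⟨hsub, _, hS⟩ := hsp
  obtain ⟨hlo, _⟩ := hS (SS φ νL νR i (fun _ => τa) (fun _ => τb))
  rw [gval φ P νL νR hν i _ _, hval φ P νL νR hν Eε wε hsub i _ _] at hlo
  have huniq : ∀ jk' : Fin 1 × Fin 1, jk' = jk := fun jk' => Subsingleton.elim _ _
  have hg : ∑ jk' : Fin 1 × Fin 1, tR (P τa τb) = 1 := by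
    simp [hτ, tR]
  have hh : ∑ jk' : Fin 1 × Fin 1, Wb φ Eε wε i jk' * tR (P τa τb) = 0 := by
    refine Finset.sum_eq_zero (fun jk' _ => ?_)
    rw [huniq jk']
    simp [Wb, hmiss]
  rw [hg, hh] at hlo
  linarith

/-- the per-block kept-edge counts add up to at most the sparsifier size. -/
lemma countSum (hsub : Eε ⊆ EG φ) :
    ∑ i : Fin m, (((Finset.univ.filter
        (fun jk : Fin d × Fin d => eM φ (i, jk.1, jk.2) ∈ Eε)).card : ℝ)) ≤ Eε.card := by
  classical
  set B := Finset.univ.filter (fun p : Fin m × Fin d × Fin d => eM φ p ∈ Eε) with hB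
  have h1 : B.card = ∑ i : Fin m, (B.filter (fun p => p.1 = i)).card :=
    Finset.card_eq_sum_card_fiberwise (fun p _ => Finset.mem_univ _)
  have h2 : ∀ i : Fin m, (B.filter (fun p => p.1 = i)).card
      = (Finset.univ.filter (fun jk : Fin d × Fin d => eM φ (i, jk.1, jk.2) ∈ Eε)).card := by
    intro i
    have himg : B.filter (fun p => p.1 = i)
        = (Finset.univ.filter (fun jk : Fin d × Fin d => eM φ (i, jk.1, jk.2) ∈ Eε)).image
            (fun jk => (i, jk.1, jk.2)) := by
      ext ⟨i', j, k⟩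
      simp only [hB, Finset.mem_filter, Finset.mem_univ, true_and, Finset.mem_image,
        Finset.filter_filter, Prod.mk.injEq]
      constructor
      · rintro ⟨hm, rfl⟩
        exact ⟨(j, k), hm, rfl, rfl, rfl⟩
      · rintro ⟨jk, hm, hi, hj, hk⟩
        subst hi; subst hj; subst hk
        exact ⟨hm, rfl⟩
    rw [himg, Finset.card_image_of_injective _
      (fun a b hab => by simpa [Prod.mk.injEq] using hab)]
  have h3 : B.card ≤ Eε.card := by
    have himg : B.image (eM φ) ⊆ Eε := by
      intro e he
      simp only [Finset.mem_image, hB, Finset.mem_filter] at he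
      obtain ⟨p, ⟨_, hp⟩, hpe⟩ := he
      rwa [← hpe]
    calc B.card = (B.image (eM φ)).card :=
          (Finset.card_image_of_injective _ (eM_inj φ)).symm
      _ ≤ Eε.card := Finset.card_le_card himg
  calc ∑ i : Fin m, (((Finset.univ.filter
        (fun jk : Fin d × Fin d => eM φ (i, jk.1, jk.2) ∈ Eε)).card : ℝ))
      = ((∑ i : Fin m, (B.filter (fun p => p.1 = i)).card : ℕ) : ℝ) := by
        push_cast
        exact Finset.sum_congr rfl (fun i _ => by rw [h2 i])
    _ = (B.card : ℝ) := by rw [← h1]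
    _ ≤ Eε.card := by exact_mod_cast h3

end Glue

/-- per-block lower bound in the small-`ε` regime -/
lemma blockBound {n m d : ℕ} (φ : (Fin m × Bool × Fin d) ↪ Fin n) (P : Pred) (νL νR : Bool)
    (ε : ℝ) (Eε : Finset (Fin n × Fin n)) (wε : Fin n × Fin n → ℝ)
    (hν : P νL νR = false) (hδ : 1 ≤ |dlt P|) (hε0 : 0 ≤ ε) (hεd : ε^2 * d ≤ 1/4096)
    (hsp : IsSparsifier P (EG φ) (fun _ => (1:ℝ)) Eε wε ε) (i : Fin m) :
    (d:ℝ)^2 / 2 ≤ ((Finset.univ.filter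
        (fun jk : Fin d × Fin d => eM φ (i, jk.1, jk.2) ∈ Eε)).card : ℝ) := by
  classical
  set D : Fin d → Fin d → ℝ := fun j k => Wb φ Eε wε i (j, k) - 1 with hD
  set Z : Finset (Fin d × Fin d) :=
    Finset.univ.filter (fun jk : Fin d × Fin d => eM φ (i, jk.1, jk.2) ∉ Eε) with hZdef
  have hZ : ∀ p ∈ Z, D p.1 p.2 = -1 := by
    intro p hp
    simp only [hZdef, Finset.mem_filter] at hp
    rw [hD]
    simp only []
    rw [Wb_eq φ Eε wε i (p.1, p.2) hp.2]
    ring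
  have hcon : ∀ x y : Fin d → Bool,
      |∑ jk : Fin d × Fin d, D jk.1 jk.2 * tR (P (x jk.1) (y jk.2))| ≤ ε * (d:ℝ)^2 := by
    intro x y
    exact constraint φ P νL νR ε Eε wε hν hε0 hsp i x y
  have hQ := Qbound P hδ D (ε * (d:ℝ)^2) hcon
  have hZcard := blockB d ε hε0 hεd D Z hZ hQ
  have hsplit : (Finset.univ.filter
        (fun jk : Fin d × Fin d => eM φ (i, jk.1, jk.2) ∈ Eε)).card + Z.card = d * d := by
    rw [hZdef]
    rw [Finset.card_filter_add_card_filter_not]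
    simp [Finset.card_univ]
  have : ((Finset.univ.filter
        (fun jk : Fin d × Fin d => eM φ (i, jk.1, jk.2) ∈ Eε)).card : ℝ) + Z.card = (d:ℝ)^2 := by
    have := congrArg (Nat.cast (R := ℝ)) hsplit
    push_cast at this
    rw [this]; ring
  linarith

set_option maxHeartbeats 2000000 in
/-- the master lemma -/
lemma master (P : Pred) (νL νR τa τb : Bool) (hν : P νL νR = false) (hτ : P τa τb = true)
    (hδ : 1 ≤ |dlt P|) (n : ℕ) (ε : ℝ) (h1 : 1 / Real.sqrt n < ε) (h2 : ε < 1) :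
    ∃ (E : Finset (Fin n × Fin n)) (w : Fin n × Fin n → ℝ),
      (∀ e ∈ E, 0 < w e) ∧
      ∀ (Eε : Finset (Fin n × Fin n)) (wε : Fin n × Fin n → ℝ),
        IsSparsifier P E w Eε wε ε → (1/65536 : ℝ) * n / ε ^ 2 ≤ (Eε.card : ℝ) := by
  classical
  have hε0 : 0 < ε := lt_of_le_of_lt (by positivity) h1
  rcases Nat.eq_zero_or_pos n with hn0 | hn1
  · subst hn0
    refine ⟨∅, fun _ => 1, by simp, fun Eε wε _ => ?_⟩
    norm_num
  -- n ≥ 1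
  have hn1R : (1:ℝ) ≤ n := by exact_mod_cast hn1
  have hεn : 1 / (n:ℝ) < ε^2 := by
    have hs : (0:ℝ) < Real.sqrt n := Real.sqrt_pos.2 (by positivity)
    have := pow_lt_pow_left₀ h1 (by positivity : (0:ℝ) ≤ 1 / Real.sqrt n) (by norm_num : 2 ≠ 0)
    calc 1 / (n:ℝ) = (1 / Real.sqrt n)^2 := by
          rw [div_pow, one_pow, Real.sq_sqrt (by positivity : (0:ℝ) ≤ (n:ℝ))]
      _ < ε^2 := this
  have hinv : 1 / ε^2 < n := by
    rw [div_lt_iff₀ (by positivity)]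
    rw [div_lt_iff₀ (by positivity : (0:ℝ) < n)] at hεn
    linarith
  have hn2 : 2 ≤ n := by
    rcases Nat.lt_or_ge n 2 with h | h
    · exfalso
      interval_cases n
      rw [Nat.cast_one, Real.sqrt_one] at h1; linarith
    · exact h
  have hn2R : (2:ℝ) ≤ n := by exact_mod_cast hn2
  by_cases hreg : ε^2 ≤ 1/4096
  · -- regime B
    set t : ℝ := 1/(4096 * ε^2) with ht
    have ht0 : 0 < t := by positivity
    have h4096 : 4096 * ε^2 ≤ 1 := by linarith
    have ht1 : 1 ≤ t := by
      rw [ht]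
      exact one_le_one_div (by positivity) h4096
    set d : ℕ := ⌊t⌋₊ with hd
    have hd1 : 1 ≤ d := Nat.le_floor (by exact_mod_cast ht1)
    have hd1R : (1:ℝ) ≤ d := by exact_mod_cast hd1
    have hdt : (d:ℝ) ≤ t := Nat.floor_le ht0.le
    have hεd : ε^2 * d ≤ 1/4096 := by
      have : ε^2 * t = 1/4096 := by rw [ht]; field_simp
      nlinarith [sq_nonneg ε]
    have h2t : t ≤ 2 * d := by
      have := Nat.lt_floor_add_one t
      rw [← hd] at this
      linarith
    have hdn : 4096 * (d:ℝ) < n := by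
      have h4t : 4096 * t = 1/ε^2 := by rw [ht]; field_simp
      have : 4096 * (d:ℝ) ≤ 4096 * t := by linarith
      linarith
    set m : ℕ := n / (2 * d) with hm
    have hcard : Fintype.card (Fin m × Bool × Fin d) ≤ Fintype.card (Fin n) := by
      simp only [Fintype.card_prod, Fintype.card_fin, Fintype.card_bool]
      exact Nat.div_mul_le_self n (2 * d)
    obtain ⟨φ⟩ := Function.Embedding.nonempty_iff_card_le.2 hcard
    refine ⟨EG φ, fun _ => 1, fun e _ => one_pos, fun Eε wε hsp => ?_⟩
    have hsub := hsp.1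
    have hblocks := fun i => blockBound φ P νL νR ε Eε wε hν hδ hε0.le hεd hsp i
    have hcount := countSum φ Eε hsub
    have hsum : (m:ℝ) * ((d:ℝ)^2/2) ≤ (Eε.card : ℝ) := by
      calc (m:ℝ) * ((d:ℝ)^2/2) = ∑ _i : Fin m, ((d:ℝ)^2/2) := by
            rw [Finset.sum_const, Finset.card_univ, Fintype.card_fin, nsmul_eq_mul]
        _ ≤ ∑ i : Fin m, (((Finset.univ.filter
            (fun jk : Fin d × Fin d => eM φ (i, jk.1, jk.2) ∈ Eε)).card : ℝ)) :=
            Finset.sum_le_sum (fun i _ => hblocks i)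
        _ ≤ Eε.card := hcount
    -- arithmetic
    have hmlow : (n:ℝ) - 2*d ≤ (m:ℝ) * (2*d) := by
      have hmod : 2*d*(n/(2*d)) + n % (2*d) = n := Nat.div_add_mod n (2*d)
      have hr : n % (2*d) < 2*d := Nat.mod_lt _ (by omega)
      have hmodR : 2*(d:ℝ)*(m:ℝ) + ((n % (2*d) : ℕ):ℝ) = n := by
        rw [hm]; exact_mod_cast hmod
      have hrR : ((n % (2*d) : ℕ) : ℝ) < 2*d := by exact_mod_cast hr
      linarith
    have hd0 : (0:ℝ) < d := by linarith
    have h4d : 4 * (d:ℝ) ≤ n := by nlinarith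
    have hmd : (n:ℝ) * d / 8 ≤ (m:ℝ) * ((d:ℝ)^2/2) := by
      have : (n:ℝ)/2 ≤ (m:ℝ)*(2*d) := by linarith
      nlinarith [hd0]
    have hfin : (1/65536 : ℝ) * n / ε^2 ≤ (n:ℝ) * d / 8 := by
      have htd : 1/(8192 * ε^2) ≤ (d:ℝ) := by
        have : t = 2 * (1/(8192 * ε^2)) := by rw [ht]; ring
        linarith
      rw [div_le_div_iff₀ (by positivity) (by norm_num : (0:ℝ) < 8)]
      have hn0R : (0:ℝ) ≤ n := by positivity
      calc (1/65536 : ℝ) * n * 8 = n * (1/(8192)) := by ring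
        _ ≤ n * (d * ε^2) := by
            apply mul_le_mul_of_nonneg_left _ hn0R
            rw [div_le_iff₀ (by positivity)] at htd
            nlinarith
        _ = n * d * ε^2 := by ring
    calc (1/65536 : ℝ) * n / ε^2 ≤ (n:ℝ) * d / 8 := hfin
      _ ≤ (m:ℝ) * ((d:ℝ)^2/2) := hmd
      _ ≤ Eε.card := hsum
  · -- regime A
    push_neg at hreg
    set m : ℕ := n / 2 with hm
    have hcard : Fintype.card (Fin m × Bool × Fin 1) ≤ Fintype.card (Fin n) := by
      simp only [Fintype.card_prod, Fintype.card_fin, Fintype.card_bool]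
      omega
    obtain ⟨φ⟩ := Function.Embedding.nonempty_iff_card_le.2 hcard
    refine ⟨EG φ, fun _ => 1, fun e _ => one_pos, fun Eε wε hsp => ?_⟩
    have hsub := hsp.1
    have hall := fun i jk => blockA φ P νL νR τa τb hν hτ ε h2 Eε wε hsp i jk
    have hcount := countSum φ Eε hsub
    have hone : ∀ i : Fin m, ((Finset.univ.filter
        (fun jk : Fin 1 × Fin 1 => eM φ (i, jk.1, jk.2) ∈ Eε)).card : ℝ) = 1 := by
      intro i
      have : (Finset.univ.filter
          (fun jk : Fin 1 × Fin 1 => eM φ (i, jk.1, jk.2) ∈ Eε)) = Finset.univ := by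
        apply Finset.filter_true_of_mem
        intro jk _
        exact hall i jk
      rw [this]
      simp [Finset.card_univ]
    have hsum : (m:ℝ) ≤ Eε.card := by
      calc (m:ℝ) = ∑ _i : Fin m, (1:ℝ) := by
            rw [Finset.sum_const, Finset.card_univ, Fintype.card_fin, nsmul_eq_mul, mul_one]
        _ = ∑ i : Fin m, ((Finset.univ.filter
            (fun jk : Fin 1 × Fin 1 => eM φ (i, jk.1, jk.2) ∈ Eε)).card : ℝ) :=
            Finset.sum_congr rfl (fun i _ => (hone i).symm)
        _ ≤ Eε.card := hcount
    have hmlow : ((n:ℝ) - 1) / 2 ≤ m := by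
      have hmodN : m * 2 + n % 2 = n := by rw [hm]; omega
      have hr : n % 2 ≤ 1 := by omega
      have hmodR : (m:ℝ) * 2 + ((n % 2 : ℕ):ℝ) = n := by exact_mod_cast hmodN
      have hrR : ((n % 2 : ℕ) : ℝ) ≤ 1 := by exact_mod_cast hr
      linarith
    have hfin : (1/65536 : ℝ) * n / ε^2 ≤ ((n:ℝ) - 1) / 2 := by
      rw [div_le_div_iff₀ (by positivity) (by norm_num : (0:ℝ) < 2)]
      have hprod : ((n:ℝ)-1) * (1/4096) ≤ ((n:ℝ)-1) * ε^2 :=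
        mul_le_mul_of_nonneg_left hreg.le (by linarith)
      linarith
    calc (1/65536 : ℝ) * n / ε^2 ≤ ((n:ℝ) - 1) / 2 := hfin
      _ ≤ m := hmlow
      _ ≤ Eε.card := hsum

end Aux

/-- There is a constant `c > 0` such that for every predicate
`P ∈ {Cut, unCut, Or, nAnd, 10̄, 01̄}`, every integer `n` and every `ε ∈ (1/√n, 1)`,
there is an `n`-vertex weighted digraph `G` (with strictly positive weights) such that
every `ε`-`P`-sparsifier of `G` has at least `c·n/ε²` edges. -/
theorem stmt12 :
    ∃ c : ℝ, 0 < c ∧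
      ∀ P ∈ [pCut, pUnCut, pOr, pNAnd, pBar10, pBar01],
        ∀ (n : ℕ) (ε : ℝ), 1 / Real.sqrt n < ε → ε < 1 →
          ∃ (E : Finset (Fin n × Fin n)) (w : Fin n × Fin n → ℝ),
            (∀ e ∈ E, 0 < w e) ∧
            ∀ (Eε : Finset (Fin n × Fin n)) (wε : Fin n × Fin n → ℝ),
              IsSparsifier P E w Eε wε ε → c * n / ε ^ 2 ≤ (Eε.card : ℝ) := by
  refine ⟨1/65536, by norm_num, ?_⟩
  intro P hP n ε h1 h2
  simp only [List.mem_cons, List.not_mem_nil, or_false] at hP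
  rcases hP with rfl | rfl | rfl | rfl | rfl | rfl
  · exact master pCut false false true false rfl rfl (by norm_num [dlt, tR, pCut]) n ε h1 h2
  · exact master pUnCut true false true true rfl rfl (by norm_num [dlt, tR, pUnCut]) n ε h1 h2
  · exact master pOr false false true false rfl rfl (by norm_num [dlt, tR, pOr]) n ε h1 h2
  · exact master pNAnd true true false false rfl rfl (by norm_num [dlt, tR, pNAnd]) n ε h1 h2
  · exact master pBar10 true false true true rfl rfl (by norm_num [dlt, tR, pBar10]) n ε h1 h2
  · exact master pBar01 false true true true rfl rfl (by norm_num [dlt, tR, pBar01]) n ε h1 h2
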